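/- arXiv:2109.13981 — 2 statements merged into one kernel-verified Lean document; each statement's English description precedes it below -/
import Mathlib

section
/- Each of the thirteen bivector fields on ℂ³ (coordinates (z, u1, u2)) given by components e₁ = (u1,0,0), e₂ = (u1u2,0,0), e₃ = (0,1,0), e₄ = (0,z,0), e₅ = (0,z²,0), e₆ = (3z²u1, z³, 0), e₇ = (0,0,u1), e₈ = (0,0,z u1), e₉ = (−z u1 u2, 0, z² u1), e₁₀ = (0,u2,0), e₁₁ = (0, z u2, 0), e₁₂ = (3 z u1 u2, z² u2, 0), e₁₃ = (0,0,u1 u2) satisfies the integrability condition J(eᵢ) = 0, where J(q) = q¹ q²_{,z} − q² q¹_{,z} + q² q⁰_{,u1} − q⁰ q²_{,u1} + q⁰ q¹_{,u2} − q¹ q⁰_{,u2}. -/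
noncomputable section

/-- `ℂ³` with coordinates `(z, u1, u2) = (x⁰, x¹, x²)`. -/
abbrev C3 : Type := ℂ × ℂ × ℂ

/-- Partial derivative in the first coordinate. -/
def pd0 (f : C3 → ℂ) (p : C3) : ℂ := deriv (fun t => f (t, p.2.1, p.2.2)) p.1

/-- Partial derivative in the second coordinate. -/
def pd1 (f : C3 → ℂ) (p : C3) : ℂ := deriv (fun t => f (p.1, t, p.2.2)) p.2.1

/-- Partial derivative in the third coordinate. -/
def pd2 (f : C3 → ℂ) (p : C3) : ℂ := deriv (fun t => f (p.1, p.2.1, t)) p.2.2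

/-- The coefficient of the Schouten self-bracket of the bivector field
`q = q0 ∂₁∧∂₂ + q1 ∂₂∧∂₀ + q2 ∂₀∧∂₁`: integrability (the Poisson condition)
is `J q0 q1 q2 = 0`. -/
def J (q0 q1 q2 : C3 → ℂ) (p : C3) : ℂ :=
  q1 p * pd0 q2 p - q2 p * pd0 q1 p + q2 p * pd1 q0 p - q0 p * pd1 q2 p +
    q0 p * pd2 q1 p - q1 p * pd2 q0 p

/-- All thirteen generators of bivector fields on `W₃` (in the `U` chart)
satisfy the integrability condition `J = 0`. -/
theorem W3_generators_integrable :
    (∀ p : C3, J (fun x => x.2.1) (fun _ => 0) (fun _ => 0) p = 0) ∧ -- e₁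
    (∀ p : C3, J (fun x => x.2.1 * x.2.2) (fun _ => 0) (fun _ => 0) p = 0) ∧ -- e₂
    (∀ p : C3, J (fun _ => 0) (fun _ => 1) (fun _ => 0) p = 0) ∧ -- e₃
    (∀ p : C3, J (fun _ => 0) (fun x => x.1) (fun _ => 0) p = 0) ∧ -- e₄
    (∀ p : C3, J (fun _ => 0) (fun x => x.1 ^ 2) (fun _ => 0) p = 0) ∧ -- e₅
    (∀ p : C3, J (fun x => 3 * x.1 ^ 2 * x.2.1) (fun x => x.1 ^ 3) (fun _ => 0) p = 0) ∧ -- e₆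
    (∀ p : C3, J (fun _ => 0) (fun _ => 0) (fun x => x.2.1) p = 0) ∧ -- e₇
    (∀ p : C3, J (fun _ => 0) (fun _ => 0) (fun x => x.1 * x.2.1) p = 0) ∧ -- e₈
    (∀ p : C3, J (fun x => -(x.1 * x.2.1 * x.2.2)) (fun _ => 0) (fun x => x.1 ^ 2 * x.2.1) p = 0) ∧ -- e₉
    (∀ p : C3, J (fun _ => 0) (fun x => x.2.2) (fun _ => 0) p = 0) ∧ -- e₁₀
    (∀ p : C3, J (fun _ => 0) (fun x => x.1 * x.2.2) (fun _ => 0) p = 0) ∧ -- e₁₁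
    (∀ p : C3, J (fun x => 3 * x.1 * x.2.1 * x.2.2) (fun x => x.1 ^ 2 * x.2.2) (fun _ => 0) p = 0) ∧ -- e₁₂
    (∀ p : C3, J (fun _ => 0) (fun _ => 0) (fun x => x.2.1 * x.2.2) p = 0) := by -- e₁₃
  refine ⟨?_,?_,?_,?_,?_,?_,?_,?_,?_,?_,?_,?_,?_⟩ <;> intro p <;>
    simp only [J, pd0, pd1, pd2] <;>
    simp [deriv_const_mul, deriv_mul_const, differentiableAt_id, mul_comm, mul_assoc,
      mul_left_comm]
end
end

section
/- Applying the Λ²-tangent transition matrix of W₃, with rows (z², −3zu1, zu2), (0, −z⁻³, 0), (0, 0, −z), to e₁ = (u1, 0, 0) yields (z²u1, 0, 0), which in coordinates (ξ, v1, v2) = (z⁻¹, z³u1, z⁻¹u2) equals (ξ v1, 0, 0). Consequently, the degeneracy locus of e₁ on W₃ is {u1 = 0} in the U chart and {ξ = 0} ∪ {v1 = 0} in the V chart, having three irreducible components in total; whereas the degeneracy locus of e₂ = (u1u2,0,0)_U = (v1 v2, 0, 0)_V has four irreducible components ({u1=0}, {u2=0}, {v1=0}, {v2=0}). Hence (W₃,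 e₁) and (W₃, e₂) are not isomorphic Poisson manifolds. -/
noncomputable section

/-- The gluing relation of `W₃ = Tot(O(−3) ⊕ O(1))`: `(z,u1,u2)` in the `U`
chart is identified with `(z⁻¹, z³u1, z⁻¹u2)` in the `V` chart for `z ≠ 0`. -/
def relW3 : C3 ⊕ C3 → C3 ⊕ C3 → Prop := fun a b =>
  ∃ z u1 u2 : ℂ, z ≠ 0 ∧ a = Sum.inl (z, u1, u2) ∧
    b = Sum.inr (z⁻¹, z ^ 3 * u1, z⁻¹ * u2)

/-- The threefold `W₃` as a topological space, glued from two copies of `ℂ³`. -/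
def W3 : Type := Quot (fun a b => relW3 a b ∨ relW3 b a)

instance : TopologicalSpace W3 := by unfold W3; infer_instance

def mkW3 : C3 ⊕ C3 → W3 := Quot.mk _

/-- Degeneracy locus of `e₁ = (u1,0,0)_U = (ξv1,0,0)_V`:
`{u1 = 0}` in the `U` chart, `{ξ = 0} ∪ {v1 = 0}` in the `V` chart. -/
def De1 : Set W3 :=
  mkW3 '' (Sum.inl '' {p : C3 | p.2.1 = 0} ∪
    Sum.inr '' {p : C3 | p.1 = 0 ∨ p.2.1 = 0})

/-- Degeneracy locus of `e₂ = (u1u2,0,0)_U = (v1v2,0,0)_V`. -/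
def De2 : Set W3 :=
  mkW3 '' (Sum.inl '' {p : C3 | p.2.1 = 0 ∨ p.2.2 = 0} ∪
    Sum.inr '' {p : C3 | p.2.1 = 0 ∨ p.2.2 = 0})

open Set Metric Topology

lemma continuous_mkW3 : Continuous mkW3 := continuous_quot_mk

lemma isQuotientMap_mkW3 : IsQuotientMap mkW3 := isQuotientMap_quot_mk

lemma switchW3 (z : ℂ) (hz : z ≠ 0) (u1 u2 : ℂ) :
    mkW3 (.inl (z, u1, u2)) = mkW3 (.inr (z⁻¹, z ^ 3 * u1, z⁻¹ * u2)) :=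
  Quot.sound (Or.inl ⟨z, u1, u2, hz, rfl, rfl⟩)

lemma switchW3' (ξ : ℂ) (hξ : ξ ≠ 0) (v1 v2 : ℂ) :
    mkW3 (.inr (ξ, v1, v2)) = mkW3 (.inl (ξ⁻¹, ξ ^ 3 * v1, ξ⁻¹ * v2)) := by
  have h := switchW3 ξ⁻¹ (inv_ne_zero hξ) (ξ ^ 3 * v1) (ξ⁻¹ * v2)
  rw [show ((ξ⁻¹⁻¹ : ℂ), (ξ⁻¹) ^ 3 * (ξ ^ 3 * v1), ξ⁻¹⁻¹ * (ξ⁻¹ * v2)) = ((ξ : ℂ), v1, v2) by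
    field_simp] at h
  exact h.symm

/-- Lift a pair of chart predicates compatible with the gluing to a subset of `W3`. -/
def liftSet (f g : C3 → Prop)
    (h : ∀ z u1 u2 : ℂ, z ≠ 0 → (f (z, u1, u2) ↔ g (z⁻¹, z ^ 3 * u1, z⁻¹ * u2))) : Set W3 :=
  fun x => Quot.lift (Sum.elim f g)
    (by
      rintro a b (⟨z, u1, u2, hz, rfl, rfl⟩ | ⟨z, u1, u2, hz, rfl, rfl⟩)
      · exact propext (h z u1 u2 hz)
      · exact (propext (h z u1 u2 hz)).symm) x

@[simp] lemma mem_liftSet_inl {f g h} (p : C3) :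
    mkW3 (.inl p) ∈ liftSet f g h ↔ f p := Iff.rfl

@[simp] lemma mem_liftSet_inr {f g h} (p : C3) :
    mkW3 (.inr p) ∈ liftSet f g h ↔ g p := Iff.rfl

lemma liftSet_closed {f g h} (hf : IsClosed {p : C3 | f p}) (hg : IsClosed {p : C3 | g p}) :
    IsClosed (liftSet f g h) := by
  rw [← isQuotientMap_mkW3.isClosed_preimage]
  rw [show mkW3 ⁻¹' (liftSet f g h) = {a : C3 ⊕ C3 | Sum.elim f g a} from rfl]
  rw [isClosed_sum_iff]
  exact ⟨hf, hg⟩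

/-- The exhaustion function on each chart. -/
def rhoC (p : C3) : ℝ := ‖p.2.1‖ ^ 2 * (1 + ‖p.1‖ ^ 2) ^ 3 + ‖p.2.2‖ ^ 2 / (1 + ‖p.1‖ ^ 2)

lemma rhoC_compat (z u1 u2 : ℂ) (hz : z ≠ 0) :
    rhoC (z, u1, u2) = rhoC (z⁻¹, z ^ 3 * u1, z⁻¹ * u2) := by
  have h0 : (0:ℝ) < ‖z‖ := by simpa [norm_pos_iff] using hz
  simp only [rhoC, norm_mul, norm_pow, norm_inv, mul_pow, inv_pow]
  rw [show ((‖z‖:ℝ) ^ 3) ^ 2 = (‖z‖ ^ 2) ^ 3 by ring]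
  have hs : (0:ℝ) < ‖z‖ ^ 2 := by positivity
  generalize ‖z‖ ^ 2 = s at hs ⊢
  have h1 : (1:ℝ) + s⁻¹ = (1 + s) / s := by field_simp; ring
  have h2 : (0:ℝ) < 1 + s := by linarith
  rw [h1, div_pow]
  field_simp

def rho : W3 → ℝ :=
  Quot.lift (Sum.elim rhoC rhoC)
    (by
      rintro a b (⟨z, u1, u2, hz, rfl, rfl⟩ | ⟨z, u1, u2, hz, rfl, rfl⟩)
      · exact rhoC_compat z u1 u2 hz
      · exact (rhoC_compat z u1 u2 hz).symm)

lemma continuous_rhoC : Continuous rhoC := by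
  have h : ∀ p : C3, (1 : ℝ) + ‖p.1‖ ^ 2 ≠ 0 := fun p => by positivity
  apply Continuous.add
  · fun_prop
  · exact Continuous.div (by fun_prop) (by fun_prop) h

lemma continuous_rho : Continuous rho :=
  continuous_quot_lift _ (continuous_rhoC.sumElim continuous_rhoC)

@[simp] lemma rho_inl (p : C3) : rho (mkW3 (.inl p)) = rhoC p := rfl
@[simp] lemma rho_inr (p : C3) : rho (mkW3 (.inr p)) = rhoC p := rfl

lemma rhoC_zero (a b : ℂ) : rhoC (0, a, b) = ‖a‖ ^ 2 + ‖b‖ ^ 2 := by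
  simp [rhoC]

lemma rhoC_fib (ξ b : ℂ) : rhoC (ξ, 0, b) = ‖b‖ ^ 2 / (1 + ‖ξ‖ ^ 2) := by
  simp [rhoC]

lemma z3_ne {z : ℂ} (hz : z ≠ 0) : z ^ 3 ≠ 0 := pow_ne_zero _ hz
lemma zi_ne {z : ℂ} (hz : z ≠ 0) : z⁻¹ ≠ 0 := inv_ne_zero hz

def SDe1 : Set W3 := liftSet (fun p => p.2.1 = 0) (fun p => p.1 = 0 ∨ p.2.1 = 0)
  (fun z _ _ hz => by simp [zi_ne hz, z3_ne hz, mul_eq_zero])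

def SDe2 : Set W3 := liftSet (fun p => p.2.1 = 0 ∨ p.2.2 = 0) (fun p => p.2.1 = 0 ∨ p.2.2 = 0)
  (fun z _ _ hz => by simp [zi_ne hz, z3_ne hz, mul_eq_zero])

def SA : Set W3 := liftSet (fun p => p.2.1 = 0 ∧ p.2.2 ≠ 0) (fun p => p.2.1 = 0 ∧ p.2.2 ≠ 0)
  (fun z _ _ hz => by simp [zi_ne hz, z3_ne hz, mul_eq_zero])

def SB : Set W3 := liftSet (fun p => p.2.2 = 0 ∧ p.2.1 ≠ 0) (fun p => p.2.2 = 0 ∧ p.2.1 ≠ 0)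
  (fun z _ _ hz => by simp [zi_ne hz, z3_ne hz, mul_eq_zero])

def SK : Set W3 := liftSet (fun p => p.2.1 = 0 ∧ p.2.2 = 0) (fun p => p.2.1 = 0 ∧ p.2.2 = 0)
  (fun z _ _ hz => by simp [zi_ne hz, z3_ne hz, mul_eq_zero])

def SAK : Set W3 := liftSet (fun p => p.2.1 = 0) (fun p => p.2.1 = 0)
  (fun z _ _ hz => by simp [zi_ne hz, z3_ne hz, mul_eq_zero])

def SBK : Set W3 := liftSet (fun p => p.2.2 = 0) (fun p => p.2.2 = 0)
  (fun z _ _ hz => by simp [zi_ne hz, z3_ne hz, mul_eq_zero])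

lemma isClosed_SAK : IsClosed SAK :=
  liftSet_closed (isClosed_eq (by fun_prop) continuous_const)
    (isClosed_eq (by fun_prop) continuous_const)

lemma isClosed_SBK : IsClosed SBK :=
  liftSet_closed (isClosed_eq (by fun_prop) continuous_const)
    (isClosed_eq (by fun_prop) continuous_const)

lemma isClosed_SK : IsClosed SK := by
  unfold SK
  apply liftSet_closed <;>
    exact (isClosed_eq (by fun_prop) continuous_const).inter
      (isClosed_eq (by fun_prop) continuous_const)

lemma De1_eq : De1 = SDe1 := by
  apply subset_antisymm
  · rintro _ ⟨a, (⟨p, hp, rfl⟩ | ⟨p, hp, rfl⟩), rfl⟩ <;> exact hp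
  · intro x hx
    obtain ⟨a, rfl⟩ := Quot.exists_rep x
    rcases a with p | p
    · exact ⟨.inl p, Or.inl ⟨p, hx, rfl⟩, rfl⟩
    · exact ⟨.inr p, Or.inr ⟨p, hx, rfl⟩, rfl⟩

lemma De2_eq : De2 = SDe2 := by
  apply subset_antisymm
  · rintro _ ⟨a, (⟨p, hp, rfl⟩ | ⟨p, hp, rfl⟩), rfl⟩ <;> exact hp
  · intro x hx
    obtain ⟨a, rfl⟩ := Quot.exists_rep x
    rcases a with p | p
    · exact ⟨.inl p, Or.inl ⟨p, hx, rfl⟩, rfl⟩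
    · exact ⟨.inr p, Or.inr ⟨p, hx, rfl⟩, rfl⟩

lemma normalW3 (x : W3) :
    (∃ q : C3, x = mkW3 (.inr q)) ∨ ∃ a b : ℂ, x = mkW3 (.inl (0, a, b)) := by
  obtain ⟨a, rfl⟩ := Quot.exists_rep x
  rcases a with ⟨z, u1, u2⟩ | q
  · by_cases hz : z = 0
    · exact Or.inr ⟨u1, u2, by rw [hz]; rfl⟩
    · exact Or.inl ⟨_, switchW3 z hz u1 u2⟩
  · exact Or.inl ⟨q, rfl⟩

lemma normalW3' (x : W3) :
    (∃ p : C3, ‖p.1‖ ≤ 1 ∧ x = mkW3 (.inl p)) ∨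
      (∃ q : C3, ‖q.1‖ ≤ 1 ∧ x = mkW3 (.inr q)) := by
  obtain ⟨a, rfl⟩ := Quot.exists_rep x
  rcases a with ⟨z, u1, u2⟩ | ⟨ξ, v1, v2⟩
  · by_cases hz : ‖z‖ ≤ 1
    · exact Or.inl ⟨(z, u1, u2), hz, rfl⟩
    · push_neg at hz
      have hz0 : z ≠ 0 := by
        intro h; rw [h] at hz; simp at hz; linarith
      refine Or.inr ⟨_, ?_, switchW3 z hz0 u1 u2⟩
      rw [norm_inv]
      exact inv_le_one_of_one_le₀ (le_of_lt hz)
  · by_cases hξ : ‖ξ‖ ≤ 1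
    · exact Or.inr ⟨(ξ, v1, v2), hξ, rfl⟩
    · push_neg at hξ
      have hξ0 : ξ ≠ 0 := by
        intro h; rw [h] at hξ; simp at hξ; linarith
      refine Or.inl ⟨_, ?_, switchW3' ξ hξ0 v1 v2⟩
      rw [norm_inv]
      exact inv_le_one_of_one_le₀ (le_of_lt hξ)

lemma coord_bound {a s R : ℝ} (ha : 0 ≤ a) (h : a ^ 2 ≤ s * R) (hs : 0 ≤ s) (hs2 : s ≤ 2) :
    a ≤ 1 + 2 * |R| := by
  have h2 : a ^ 2 ≤ 2 * |R| := le_trans h (by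
    have := abs_nonneg R
    have := le_abs_self R
    nlinarith)
  by_cases h1 : a ≤ 1
  · linarith [abs_nonneg R]
  · push_neg at h1
    nlinarith

lemma rhoC_bounds {p : C3} {R : ℝ} (h : rhoC p ≤ R) (h1 : ‖p.1‖ ≤ 1) :
    ‖p.2.1‖ ≤ 1 + 2 * |R| ∧ ‖p.2.2‖ ≤ 1 + 2 * |R| := by
  obtain ⟨z, a, b⟩ := p
  simp only [rhoC] at h
  have hd : (0:ℝ) < 1 + ‖z‖ ^ 2 := by positivity
  have hd2 : (1:ℝ) + ‖z‖ ^ 2 ≤ 2 := by nlinarith [norm_nonneg z]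
  have hp3 : (1:ℝ) ≤ (1 + ‖z‖ ^ 2) ^ 3 := one_le_pow₀ (by nlinarith [sq_nonneg ‖z‖])
  have ht1 : ‖a‖ ^ 2 * 1 ≤ ‖a‖ ^ 2 * (1 + ‖z‖ ^ 2) ^ 3 :=
    mul_le_mul_of_nonneg_left hp3 (sq_nonneg _)
  have ht2 : (0:ℝ) ≤ ‖b‖ ^ 2 / (1 + ‖z‖ ^ 2) := by positivity
  have ha : ‖a‖ ^ 2 ≤ R := by nlinarith
  have hb' : ‖b‖ ^ 2 / (1 + ‖z‖ ^ 2) ≤ R := by nlinarith [sq_nonneg ‖a‖]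
  have hb : ‖b‖ ^ 2 ≤ (1 + ‖z‖ ^ 2) * R := by
    rw [div_le_iff₀ hd] at hb'; linarith
  constructor
  · exact coord_bound (norm_nonneg a) (show ‖a‖ ^ 2 ≤ 1 * R by linarith) (by norm_num)
      (by norm_num)
  · exact coord_bound (norm_nonneg b) (by linarith) hd.le hd2

lemma isCompact_sublevel (R : ℝ) : IsCompact {x : W3 | rho x ≤ R} := by
  set b : ℝ := 1 + 2 * |R| with hb
  set KC : Set C3 := closedBall (0:ℂ) 1 ×ˢ closedBall (0:ℂ) b ×ˢ closedBall (0:ℂ) b with hKC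
  have hKCc : IsCompact KC :=
    (isCompact_closedBall _ _).prod ((isCompact_closedBall _ _).prod (isCompact_closedBall _ _))
  have hcomp : IsCompact (mkW3 '' (Sum.inl '' KC ∪ Sum.inr '' KC)) :=
    (IsCompact.union (hKCc.image continuous_inl) (hKCc.image continuous_inr)).image
      continuous_mkW3
  refine IsCompact.of_isClosed_subset hcomp (isClosed_le continuous_rho continuous_const) ?_
  intro x hx
  have hmem : ∀ p : C3, ‖p.1‖ ≤ 1 → rhoC p ≤ R → p ∈ KC := by
    intro p h1 h2
    obtain ⟨hA, hB⟩ := rhoC_bounds h2 h1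
    exact ⟨by simpa using h1, by simpa using hA, by simpa using hB⟩
  rcases normalW3' x with ⟨p, h1, rfl⟩ | ⟨p, h1, rfl⟩
  · exact ⟨.inl p, Or.inl ⟨p, hmem p h1 hx, rfl⟩, rfl⟩
  · exact ⟨.inr p, Or.inr ⟨p, hmem p h1 hx, rfl⟩, rfl⟩

lemma isCompact_SK : IsCompact SK := by
  refine IsCompact.of_isClosed_subset (isCompact_sublevel 0) isClosed_SK ?_
  intro x hx
  rcases normalW3 x with ⟨⟨ξ, v1, v2⟩, rfl⟩ | ⟨a2, b2, rfl⟩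
  · obtain ⟨h1, h2⟩ := hx
    simp only [mem_setOf_eq, rho_inr]
    rw [show v1 = 0 from h1, show v2 = 0 from h2]
    simp [rhoC]
  · obtain ⟨h1, h2⟩ := hx
    simp only [mem_setOf_eq, rho_inl]
    rw [show a2 = 0 from h1, show b2 = 0 from h2]
    simp [rhoC]

def arcI (f : ℝ → C3 ⊕ C3) : Set W3 := (fun t => mkW3 (f t)) '' Set.Icc 0 1

lemma arcI_preconn {f : ℝ → C3 ⊕ C3} (hf : Continuous f) : IsPreconnected (arcI f) :=
  isPreconnected_Icc.image _ (continuous_mkW3.comp hf).continuousOn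

lemma mem_arcI (f : ℝ → C3 ⊕ C3) {t : ℝ} (h0 : 0 ≤ t) (h1 : t ≤ 1) :
    mkW3 (f t) ∈ arcI f := Set.mem_image_of_mem _ ⟨h0, h1⟩

def segV1 (a b c : ℂ) : ℝ → C3 ⊕ C3 := fun t => .inr (0, a + (t : ℂ) * (b - a), c)
def segV2 (w a b : ℂ) : ℝ → C3 ⊕ C3 := fun t => .inr (0, w, a + (t : ℂ) * (b - a))

lemma segV1_cont (a b c : ℂ) : Continuous (segV1 a b c) := by
  unfold segV1; fun_prop

lemma segV2_cont (w a b : ℂ) : Continuous (segV2 w a b) := by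
  unfold segV2; fun_prop

lemma segV1_zero (a b c : ℂ) : segV1 a b c 0 = .inr (0, a, c) := by simp [segV1]
lemma segV1_one (a b c : ℂ) : segV1 a b c 1 = .inr (0, b, c) := by simp [segV1]
lemma segV2_zero (w a b : ℂ) : segV2 w a b 0 = .inr (0, w, a) := by simp [segV2]
lemma segV2_one (w a b : ℂ) : segV2 w a b 1 = .inr (0, w, b) := by simp [segV2]

set_option maxHeartbeats 2000000 in
lemma E_preconn (R : ℝ) : IsPreconnected {x : W3 | x ∈ SDe1 ∧ R < rho x} := by
  set N : ℝ := Real.sqrt (max R 0) + 1 with hNdef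
  have hN0 : 0 ≤ N := by positivity
  have hNR : R < N ^ 2 := by
    have hs := Real.sq_sqrt (le_max_right R 0)
    nlinarith [Real.sqrt_nonneg (max R 0), le_max_left R 0]
  have hcN : ‖((N : ℝ) : ℂ)‖ = N := by rw [Complex.norm_real]; exact abs_of_nonneg hN0
  have hcN2 : ‖((N : ℝ) : ℂ)‖ ^ 2 = N ^ 2 := by rw [hcN]
  set E := {x : W3 | x ∈ SDe1 ∧ R < rho x} with hEdef
  set x₀ := mkW3 (.inr (0, (N : ℂ), (N : ℂ))) with hx0
  have hmemE0 : ∀ a b : ℂ, R < ‖a‖ ^ 2 + ‖b‖ ^ 2 → mkW3 (.inr (0, a, b)) ∈ E :=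
    fun a b h => ⟨Or.inl rfl, by rw [rho_inr, rhoC_zero]; exact h⟩
  -- chains inside the fiber plane {ξ = 0}
  have chain0 : ∀ v1 v2 : ℂ, R < ‖v1‖ ^ 2 + ‖v2‖ ^ 2 →
      ∃ T : Set W3, IsPreconnected T ∧ T ⊆ E ∧ mkW3 (.inr (0, v1, v2)) ∈ T ∧ x₀ ∈ T := by
    intro v1 v2 hρ
    by_cases h2 : R < ‖v2‖ ^ 2
    · refine ⟨arcI (segV1 v1 (N : ℂ) v2) ∪ arcI (segV2 (N : ℂ) v2 (N : ℂ)), ?_, ?_, ?_, ?_⟩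
      · apply IsPreconnected.union (mkW3 (.inr (0, (N : ℂ), v2)))
        · rw [← segV1_one v1 (N : ℂ) v2]; exact mem_arcI _ zero_le_one le_rfl
        · rw [← segV2_zero (N : ℂ) v2 (N : ℂ)]; exact mem_arcI _ le_rfl zero_le_one
        · exact arcI_preconn (segV1_cont _ _ _)
        · exact arcI_preconn (segV2_cont _ _ _)
      · rintro _ (⟨t, ht, rfl⟩ | ⟨t, ht, rfl⟩)
        · exact hmemE0 _ _ (by nlinarith [norm_nonneg (v1 + (t : ℂ) * ((N : ℂ) - v1))])
        · exact hmemE0 _ _ (by nlinarith [norm_nonneg (v2 + (t : ℂ) * ((N : ℂ) - v2))])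
      · left; rw [← segV1_zero v1 (N : ℂ) v2]; exact mem_arcI _ le_rfl zero_le_one
      · right; rw [hx0, ← segV2_one (N : ℂ) v2 (N : ℂ)]; exact mem_arcI _ zero_le_one le_rfl
    · push_neg at h2
      have hv1 : v1 ≠ 0 := by
        intro h; rw [h] at hρ; rw [norm_zero] at hρ; nlinarith
      have hv1n : 0 < ‖v1‖ := norm_pos_iff.mpr hv1
      set M : ℝ := N / ‖v1‖ with hMdef
      have hM0 : 0 ≤ M := div_nonneg hN0 (norm_nonneg _)
      set w : ℂ := v1 * (((1 : ℝ) + M : ℝ) : ℂ) with hwdef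
      have hwnorm : ‖w‖ = ‖v1‖ + N := by
        rw [hwdef, norm_mul, Complex.norm_real, Real.norm_eq_abs,
          abs_of_nonneg (by linarith), hMdef, mul_add, mul_one,
          mul_div_cancel₀ _ hv1n.ne']
      have hw2 : R < ‖w‖ ^ 2 := by
        have h := hwnorm
        nlinarith [hv1n.le, hN0, mul_nonneg hv1n.le hN0]
      refine ⟨(arcI (segV1 v1 w v2) ∪ arcI (segV2 w v2 (N : ℂ))) ∪
        arcI (segV1 w (N : ℂ) (N : ℂ)), ?_, ?_, ?_, ?_⟩
      · apply IsPreconnected.union (mkW3 (.inr (0, w, (N : ℂ))))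
        · right; rw [← segV2_one w v2 (N : ℂ)]; exact mem_arcI _ zero_le_one le_rfl
        · rw [← segV1_zero w (N : ℂ) (N : ℂ)]; exact mem_arcI _ le_rfl zero_le_one
        · apply IsPreconnected.union (mkW3 (.inr (0, w, v2)))
          · rw [← segV1_one v1 w v2]; exact mem_arcI _ zero_le_one le_rfl
          · rw [← segV2_zero w v2 (N : ℂ)]; exact mem_arcI _ le_rfl zero_le_one
          · exact arcI_preconn (segV1_cont _ _ _)
          · exact arcI_preconn (segV2_cont _ _ _)
        · exact arcI_preconn (segV1_cont _ _ _)
      · rintro _ ((⟨t, ht, rfl⟩ | ⟨t, ht, rfl⟩) | ⟨t, ht, rfl⟩)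
        · refine hmemE0 _ _ ?_
          have hA : v1 + (t : ℂ) * (w - v1) = v1 * (((1 : ℝ) + t * M : ℝ) : ℂ) := by
            rw [hwdef]; push_cast; ring
          rw [hA, norm_mul, Complex.norm_real, Real.norm_eq_abs,
            abs_of_nonneg (by nlinarith [ht.1] : (0:ℝ) ≤ 1 + t * M)]
          have h1tm : (1 : ℝ) ≤ 1 + t * M := by nlinarith [ht.1]
          have hX2 : (1:ℝ) ≤ (1 + t * M) ^ 2 := one_le_pow₀ h1tm
          nlinarith [norm_nonneg v1, norm_nonneg v2,
            mul_le_mul_of_nonneg_left hX2 (sq_nonneg ‖v1‖)]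
        · exact hmemE0 _ _ (by nlinarith [norm_nonneg (v2 + (t : ℂ) * ((N : ℂ) - v2))])
        · exact hmemE0 _ _ (by nlinarith [norm_nonneg (w + (t : ℂ) * ((N : ℂ) - w))])
      · left; left; rw [← segV1_zero v1 w v2]; exact mem_arcI _ le_rfl zero_le_one
      · right; rw [hx0, ← segV1_one w (N : ℂ) (N : ℂ)]; exact mem_arcI _ zero_le_one le_rfl
  -- chains starting from a point of the fiber over infinity
  have hfib : ∀ ξ v2 : ℂ, R < ‖v2‖ ^ 2 / (1 + ‖ξ‖ ^ 2) →
      ∃ T : Set W3, IsPreconnected T ∧ T ⊆ E ∧ mkW3 (.inr (ξ, 0, v2)) ∈ T ∧ x₀ ∈ T := by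
    intro ξ v2 hρ
    have hv2 : R < ‖v2‖ ^ 2 := by
      have := div_le_self (by positivity : (0:ℝ) ≤ ‖v2‖ ^ 2)
        (by nlinarith [norm_nonneg ξ] : (1:ℝ) ≤ 1 + ‖ξ‖ ^ 2)
      linarith
    obtain ⟨T0, hT0p, hT0E, hT0s, hT0x⟩ := chain0 0 v2 (by simpa using hv2)
    set g : ℝ → C3 ⊕ C3 := fun t => .inr (((((1 : ℝ) - t) : ℝ) : ℂ) * ξ, 0, v2) with hg
    have hgc : Continuous g := by unfold g; fun_prop
    refine ⟨arcI g ∪ T0, ?_, ?_, ?_, Or.inr hT0x⟩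
    · apply IsPreconnected.union (mkW3 (.inr (0, 0, v2)))
      · rw [show (.inr (0, 0, v2) : C3 ⊕ C3) = g 1 by simp [hg]]
        exact mem_arcI _ zero_le_one le_rfl
      · exact hT0s
      · exact arcI_preconn hgc
      · exact hT0p
    · rintro _ (⟨t, ht, rfl⟩ | hy)
      · refine ⟨Or.inr rfl, ?_⟩
        rw [rho_inr, rhoC_fib]
        have hle : ‖((((1 : ℝ) - t) : ℝ) : ℂ) * ξ‖ ^ 2 ≤ ‖ξ‖ ^ 2 := by
          rw [norm_mul, Complex.norm_real, Real.norm_eq_abs]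
          have h1 : |1 - t| ≤ 1 := abs_le.mpr ⟨by linarith [ht.2], by linarith [ht.1]⟩
          have h2 := mul_le_of_le_one_left (norm_nonneg ξ) h1
          nlinarith [abs_nonneg (1 - t), norm_nonneg ξ,
            mul_nonneg (abs_nonneg (1 - t)) (norm_nonneg ξ)]
        refine lt_of_lt_of_le hρ ?_
        gcongr
      · exact hT0E hy
    · left
      rw [show (.inr (ξ, 0, v2) : C3 ⊕ C3) = g 0 by simp [hg]]
      exact mem_arcI _ le_rfl zero_le_one
  -- every point of E is connected to the basepoint inside E
  have H : ∀ x ∈ E, ∃ T : Set W3, IsPreconnected T ∧ T ⊆ E ∧ x ∈ T ∧ x₀ ∈ T := by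
    intro x hx
    rcases normalW3 x with ⟨⟨ξ, v1, v2⟩, rfl⟩ | ⟨a, b, rfl⟩
    · have hρ := hx.2
      rcases (show ξ = 0 ∨ v1 = 0 from hx.1) with h | h
      · subst h
        rw [rho_inr, rhoC_zero] at hρ
        exact chain0 v1 v2 hρ
      · subst h
        rw [rho_inr, rhoC_fib] at hρ
        exact hfib ξ v2 hρ
    · have hD : a = 0 := hx.1
      subst hD
      have hρ := hx.2
      rw [rho_inl, rhoC_zero] at hρ
      simp only [norm_zero] at hρ
      have hb2 : R < ‖b‖ ^ 2 := by nlinarith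
      -- arcs in the U chart
      set f1 : ℝ → C3 ⊕ C3 := fun t => .inl (0, 0, ((((1 : ℝ) + t) : ℝ) : ℂ) * b) with hf1
      set f2 : ℝ → C3 ⊕ C3 := fun t => .inl ((t : ℂ), 0, (((2 : ℝ) : ℝ) : ℂ) * b) with hf2
      have hf1c : Continuous f1 := by unfold f1; fun_prop
      have hf2c : Continuous f2 := by unfold f2; fun_prop
      have h4 : ‖((2 : ℝ) : ℂ) * b‖ ^ 2 = 4 * ‖b‖ ^ 2 := by
        rw [norm_mul, Complex.norm_real, Real.norm_eq_abs,
          abs_of_nonneg (by norm_num : (0:ℝ) ≤ 2)]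
        ring
      have hfibh : R < ‖(((2 : ℝ) : ℂ)) * b‖ ^ 2 / (1 + ‖(1 : ℂ)‖ ^ 2) := by
        rw [h4, norm_one]
        rw [lt_div_iff₀ (by norm_num : (0:ℝ) < 1 + 1 ^ 2)]
        nlinarith [norm_nonneg b]
      obtain ⟨Tf, hTfp, hTfE, hTfs, hTfx⟩ := hfib 1 (((2 : ℝ) : ℂ) * b) hfibh
      have hbridge : mkW3 (.inl (1, 0, ((2 : ℝ) : ℂ) * b)) = mkW3 (.inr (1, 0, ((2 : ℝ) : ℂ) * b)) := by
        have h := switchW3 1 one_ne_zero 0 (((2 : ℝ) : ℂ) * b)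
        simpa using h
      refine ⟨(arcI f1 ∪ arcI f2) ∪ Tf, ?_, ?_, ?_, Or.inr hTfx⟩
      · apply IsPreconnected.union (mkW3 (.inl (1, 0, ((2 : ℝ) : ℂ) * b)))
        · right
          rw [show (.inl (1, 0, ((2 : ℝ) : ℂ) * b) : C3 ⊕ C3) = f2 1 by simp [hf2]]
          exact mem_arcI _ zero_le_one le_rfl
        · rw [hbridge]; exact hTfs
        · apply IsPreconnected.union (mkW3 (.inl (0, 0, ((2 : ℝ) : ℂ) * b)))
          · rw [show (.inl (0, 0, ((2 : ℝ) : ℂ) * b) : C3 ⊕ C3) = f1 1 by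
              norm_num [hf1]]
            exact mem_arcI _ zero_le_one le_rfl
          · rw [show (.inl (0, 0, ((2 : ℝ) : ℂ) * b) : C3 ⊕ C3) = f2 0 by simp [hf2]]
            exact mem_arcI _ le_rfl zero_le_one
          · exact arcI_preconn hf1c
          · exact arcI_preconn hf2c
        · exact hTfp
      · rintro _ ((⟨t, ht, rfl⟩ | ⟨t, ht, rfl⟩) | hy)
        · refine ⟨rfl, ?_⟩
          rw [rho_inl, rhoC_zero]
          rw [norm_mul, Complex.norm_real, Real.norm_eq_abs,
            abs_of_nonneg (by linarith [ht.1] : (0:ℝ) ≤ 1 + t)]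
          have h1t : (1 : ℝ) ≤ 1 + t := by linarith [ht.1]
          have hX2 : (1:ℝ) ≤ (1 + t) ^ 2 := one_le_pow₀ h1t
          simp only [norm_zero]
          nlinarith [norm_nonneg b, mul_le_mul_of_nonneg_left hX2 (sq_nonneg ‖b‖)]
        · refine ⟨rfl, ?_⟩
          rw [rho_inl, rhoC_fib]
          have htn : ‖((t : ℝ) : ℂ)‖ ^ 2 = t ^ 2 := by
            rw [Complex.norm_real, Real.norm_eq_abs, sq_abs]
          rw [h4, htn, lt_div_iff₀ (by positivity : (0:ℝ) < 1 + t ^ 2)]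
          have ht2 : t ^ 2 ≤ 1 := by nlinarith [ht.1, ht.2]
          rcases le_or_gt 0 R with hR0 | hR0
          · have h1 : R * t ^ 2 ≤ R := by nlinarith
            nlinarith [sq_nonneg ‖b‖]
          · nlinarith [sq_nonneg t, sq_nonneg ‖b‖, mul_nonneg (le_of_lt (neg_pos.mpr hR0)) (sq_nonneg t)]
        · exact hTfE hy
      · left; left
        rw [show (.inl (0, 0, b) : C3 ⊕ C3) = f1 0 by simp [hf1]]
        exact mem_arcI _ le_rfl zero_le_one
  choose! T hT1 hT2 hT3 hT4 using H
  have hEeq : E = ⋃₀ (T '' E) := by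
    apply subset_antisymm
    · exact fun x hx => ⟨T x, ⟨x, hx, rfl⟩, hT3 x hx⟩
    · rintro y ⟨S, ⟨x, hx, rfl⟩, hy⟩
      exact hT2 x hx hy
  rw [hEdef] at hEeq ⊢
  rw [hEeq]
  apply isPreconnected_sUnion x₀
  · rintro S ⟨x, hx, rfl⟩; exact hT4 x hx
  · rintro S ⟨x, hx, rfl⟩; exact hT1 x hx

lemma rho_unbounded_SA (M : ℝ) : ∃ y ∈ SA, M < rho y := by
  set c : ℝ := Real.sqrt (max M 0) + 1 with hc
  have hc0 : 0 < c := by positivity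
  have hcM : M < c ^ 2 := by
    have hs := Real.sq_sqrt (le_max_right M 0)
    nlinarith [Real.sqrt_nonneg (max M 0), le_max_left M 0]
  refine ⟨mkW3 (.inl (0, 0, (c : ℂ))), ⟨rfl, ?_⟩, ?_⟩
  · exact Complex.ofReal_ne_zero.mpr hc0.ne'
  · rw [rho_inl, rhoC_zero, norm_zero, Complex.norm_real, Real.norm_eq_abs,
      abs_of_nonneg hc0.le]
    nlinarith

lemma rho_unbounded_SB (M : ℝ) : ∃ y ∈ SB, M < rho y := by
  set c : ℝ := Real.sqrt (max M 0) + 1 with hc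
  have hc0 : 0 < c := by positivity
  have hcM : M < c ^ 2 := by
    have hs := Real.sq_sqrt (le_max_right M 0)
    nlinarith [Real.sqrt_nonneg (max M 0), le_max_left M 0]
  refine ⟨mkW3 (.inl (0, (c : ℂ), 0)), ⟨rfl, ?_⟩, ?_⟩
  · exact Complex.ofReal_ne_zero.mpr hc0.ne'
  · rw [rho_inl, rhoC_zero, norm_zero, Complex.norm_real, Real.norm_eq_abs,
      abs_of_nonneg hc0.le]
    nlinarith

lemma no_homeo : ¬ ∃ φ : W3 ≃ₜ W3, φ '' De1 = De2 := by
  rintro ⟨φ, hφ⟩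
  rw [De1_eq, De2_eq] at hφ
  have hφ1 : ∀ x ∈ SDe1, φ x ∈ SDe2 := fun x hx => hφ ▸ Set.mem_image_of_mem φ hx
  have hφ2 : ∀ y ∈ SDe2, ∃ x ∈ SDe1, φ x = y := by
    intro y hy
    rw [← hφ] at hy
    rcases hy with ⟨x, hx, rfl⟩
    exact ⟨x, hx, rfl⟩
  have hK' : IsCompact (φ ⁻¹' SK) := φ.isCompact_preimage.mpr isCompact_SK
  obtain ⟨R, hR⟩ : ∃ R : ℝ, ∀ y ∈ φ ⁻¹' SK, rho y ≤ R := by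
    rcases (hK'.image continuous_rho).bddAbove with ⟨R, hR⟩
    exact ⟨R, fun y hy => hR (Set.mem_image_of_mem _ hy)⟩
  set E := {x : W3 | x ∈ SDe1 ∧ R < rho x} with hE
  -- pointwise facts about the pieces of `De2`
  have hSA_not_SBK : ∀ y, y ∈ SA → y ∉ SBK := by
    intro y hy hy'
    obtain ⟨a, rfl⟩ := Quot.exists_rep y
    rcases a with p | p <;> exact hy.2 hy'
  have hSB_not_SAK : ∀ y, y ∈ SB → y ∉ SAK := by
    intro y hy hy'
    obtain ⟨a, rfl⟩ := Quot.exists_rep y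
    rcases a with p | p <;> exact hy.2 hy'
  have hSA_De2 : ∀ y, y ∈ SA → y ∈ SDe2 := by
    intro y hy
    obtain ⟨a, rfl⟩ := Quot.exists_rep y
    rcases a with p | p <;> exact Or.inl hy.1
  have hSB_De2 : ∀ y, y ∈ SB → y ∈ SDe2 := by
    intro y hy
    obtain ⟨a, rfl⟩ := Quot.exists_rep y
    rcases a with p | p <;> exact Or.inr hy.1
  have hOA : IsOpen (φ ⁻¹' SBKᶜ) := isClosed_SBK.isOpen_compl.preimage φ.continuous
  have hOB : IsOpen (φ ⁻¹' SAKᶜ) := isClosed_SAK.isOpen_compl.preimage φ.continuous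
  have hcov : E ⊆ φ ⁻¹' SBKᶜ ∪ φ ⁻¹' SAKᶜ := by
    intro x hx
    have h2 : φ x ∈ SDe2 := hφ1 x hx.1
    have hnK : φ x ∉ SK := fun h => absurd (hR _ h) (not_le.mpr hx.2)
    rw [Set.mem_union, Set.mem_preimage, Set.mem_preimage, Set.mem_compl_iff,
      Set.mem_compl_iff]
    obtain ⟨a, ha⟩ := Quot.exists_rep (φ x)
    rw [← ha] at h2 hnK ⊢
    rcases a with p | p <;>
    · rcases h2 with h | h
      · exact Or.inl fun hc => hnK ⟨h, hc⟩
      · exact Or.inr fun hc => hnK ⟨hc, h⟩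
  have hAne : (E ∩ φ ⁻¹' SBKᶜ).Nonempty := by
    by_contra hcon
    rw [Set.not_nonempty_iff_eq_empty] at hcon
    have hsub : SDe1 ∩ φ ⁻¹' SA ⊆ {x | rho x ≤ R} := by
      rintro x ⟨hx1, hx2⟩
      by_contra hlt
      simp only [Set.mem_setOf_eq, not_le] at hlt
      exact Set.eq_empty_iff_forall_notMem.mp hcon x
        ⟨⟨hx1, hlt⟩, fun hc => hSA_not_SBK _ hx2 hc⟩
    have hSAsub : SA ⊆ φ '' {x | rho x ≤ R} := by
      intro y hy
      obtain ⟨x, hx1, rfl⟩ := hφ2 y (hSA_De2 y hy)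
      exact ⟨x, hsub ⟨hx1, hy⟩, rfl⟩
    have hcomp : IsCompact (φ '' {x | rho x ≤ R}) :=
      (isCompact_sublevel R).image φ.continuous
    obtain ⟨Mb, hMb⟩ := (hcomp.image continuous_rho).bddAbove
    obtain ⟨y, hySA, hy⟩ := rho_unbounded_SA Mb
    exact absurd (hMb (Set.mem_image_of_mem _ (hSAsub hySA))) (not_le.mpr hy)
  have hBne : (E ∩ φ ⁻¹' SAKᶜ).Nonempty := by
    by_contra hcon
    rw [Set.not_nonempty_iff_eq_empty] at hcon
    have hsub : SDe1 ∩ φ ⁻¹' SB ⊆ {x | rho x ≤ R} := by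
      rintro x ⟨hx1, hx2⟩
      by_contra hlt
      simp only [Set.mem_setOf_eq, not_le] at hlt
      exact Set.eq_empty_iff_forall_notMem.mp hcon x
        ⟨⟨hx1, hlt⟩, fun hc => hSB_not_SAK _ hx2 hc⟩
    have hSBsub : SB ⊆ φ '' {x | rho x ≤ R} := by
      intro y hy
      obtain ⟨x, hx1, rfl⟩ := hφ2 y (hSB_De2 y hy)
      exact ⟨x, hsub ⟨hx1, hy⟩, rfl⟩
    have hcomp : IsCompact (φ '' {x | rho x ≤ R}) :=
      (isCompact_sublevel R).image φ.continuous
    obtain ⟨Mb, hMb⟩ := (hcomp.image continuous_rho).bddAbove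
    obtain ⟨y, hySB, hy⟩ := rho_unbounded_SB Mb
    exact absurd (hMb (Set.mem_image_of_mem _ (hSBsub hySB))) (not_le.mpr hy)
  obtain ⟨y, hyE, hyAB⟩ := E_preconn R _ _ hOA hOB hcov hAne hBne
  have hA' : φ y ∉ SBK := hyAB.1
  have hB' : φ y ∉ SAK := hyAB.2
  have h2 : φ y ∈ SDe2 := hφ1 y hyE.1
  obtain ⟨a, ha⟩ := Quot.exists_rep (φ y)
  rw [← ha] at h2 hA' hB'
  rcases a with p | p <;> rcases h2 with h | h <;>
    first
    | exact hB' h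
    | exact hA' h

/-- Applying the `Λ²T`-transition matrix of `W₃` to `e₁ = (u1,0,0)` gives
`(z²u1, 0, 0) = (ξv1, 0, 0)`; the degeneracy locus of `e₁` is `{u1 = 0}` in
the `U` chart and `{ξ = 0} ∪ {v1 = 0}` in the `V` chart (three irreducible
components in total), while that of `e₂` has the four components
`{u1=0}, {u2=0}` and `{v1=0}, {v2=0}`; hence `(W₃,e₁)` and `(W₃,e₂)` are not
isomorphic Poisson manifolds: no automorphism of `W₃` carries `D(e₁)` onto
`D(e₂)`. -/

theorem W3_e1_e2_not_isomorphic :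
    (∀ z u1 u2 : ℂ, z ≠ 0 →
      Matrix.mulVec !![z ^ 2, -(3 * z * u1), z * u2;
                       0, -(z ^ 3)⁻¹, 0;
                       0, 0, -z] ![u1, 0, 0] = ![z ^ 2 * u1, 0, 0] ∧
      z ^ 2 * u1 = z⁻¹ * (z ^ 3 * u1)) ∧
    ({p : C3 | ((p.2.1, (0 : ℂ), (0 : ℂ)) : C3) = 0} = {p : C3 | p.2.1 = 0}) ∧
    ({p : C3 | ((p.1 * p.2.1, (0 : ℂ), (0 : ℂ)) : C3) = 0} =
      {p : C3 | p.1 = 0} ∪ {p : C3 | p.2.1 = 0}) ∧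
    ({p : C3 | ((p.2.1 * p.2.2, (0 : ℂ), (0 : ℂ)) : C3) = 0} =
      {p : C3 | p.2.1 = 0} ∪ {p : C3 | p.2.2 = 0}) ∧
    (¬ ∃ φ : W3 ≃ₜ W3, φ '' De1 = De2) := by
  refine ⟨?_, ?_, ?_, ?_, no_homeo⟩
  · intro z u1 u2 hz
    constructor
    · funext i
      fin_cases i <;> simp [Matrix.mulVec, dotProduct, Fin.sum_univ_three]
    · field_simp
  · ext p; simp [Prod.ext_iff]
  · ext p; simp [Prod.ext_iff, mul_eq_zero]
  · ext p; simp [Prod.ext_iff, mul_eq_zero]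
end
end
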